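/- Let L be a subdirectly irreducible distributive rotational lattice and a ∈ L a non-stable element (g(a) ≠ a) whose orbit {g^i(a) : i ≥ 0} has exactly n elements. Then the subalgebra of L generated by {a} is isomorphic (as a rotational lattice) to the n-dimensional rotational cube 𝔅_n. -/

import Mathlib

/-- A congruence of a rotational lattice `(L; ⊔, ⊓, g)`. -/
def IsCongruence {L : Type*} [Lattice L] (g : L → L) (r : L → L → Prop) : Prop :=
  Equivalence r ∧
  (∀ x₁ y₁ x₂ y₂, r x₁ y₁ → r x₂ y₂ → r (x₁ ⊔ x₂) (y₁ ⊔ y₂)) ∧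
  (∀ x₁ y₁ x₂ y₂, r x₁ y₁ → r x₂ y₂ → r (x₁ ⊓ x₂) (y₁ ⊓ y₂)) ∧
  (∀ x y, r x y → r (g x) (g y))

/-- Subdirect irreducibility: there is a smallest congruence distinct from equality. -/
def SubdirectlyIrreducible {L : Type*} [Lattice L] (g : L → L) : Prop :=
  ∃ μ : L → L → Prop, IsCongruence g μ ∧ μ ≠ (· = ·) ∧
    ∀ θ : L → L → Prop, IsCongruence g θ → θ ≠ (· = ·) → ∀ x y, μ x y → θ x y

/-- The subalgebra generated by `S`. -/
def genSub {L : Type*} [Lattice L] (g : L → L) (S : Set L) : Set L :=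
  ⋂₀ {T : Set L | S ⊆ T ∧ (∀ x ∈ T, ∀ y ∈ T, x ⊔ y ∈ T) ∧
      (∀ x ∈ T, ∀ y ∈ T, x ⊓ y ∈ T) ∧ (∀ x ∈ T, g x ∈ T)}

/-! ### Auxiliary lemmas -/

section Aux

open Order

/-- Prime filter separation in a (possibly unbounded) distributive lattice. -/
theorem RotAux.exists_primefilter {L : Type*} [DistribLattice L] {c d : L} (h : ¬ c ≤ d) :
    ∃ P : Set L, c ∈ P ∧ d ∉ P ∧ (∀ x y : L, x ⊔ y ∈ P ↔ x ∈ P ∨ y ∈ P) ∧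
      (∀ x y : L, x ⊓ y ∈ P ↔ x ∈ P ∧ y ∈ P) := by
  classical
  set L' := WithTop (WithBot L)
  let e : L → L' := fun x => ((x : WithBot L) : L')
  have he_le : ∀ x y : L, e x ≤ e y ↔ x ≤ y := by
    intro x y
    rw [WithTop.coe_le_coe, WithBot.coe_le_coe]
  have he_sup : ∀ x y : L, e (x ⊔ y) = e x ⊔ e y := by
    intro x y; simp only [e, WithBot.coe_sup, WithTop.coe_sup]
  have he_inf : ∀ x y : L, e (x ⊓ y) = e x ⊓ e y := by
    intro x y; simp only [e, WithBot.coe_inf, WithTop.coe_inf]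
  have hdisj : Disjoint ((PFilter.principal (e c) : PFilter L') : Set L')
      ((Ideal.principal (e d) : Ideal L') : Set L') := by
    rw [Set.disjoint_left]
    intro z hz1 hz2
    simp only [SetLike.mem_coe, PFilter.mem_principal] at hz1
    simp only [SetLike.mem_coe, Ideal.mem_principal] at hz2
    exact h ((he_le c d).1 (le_trans hz1 hz2))
  obtain ⟨J, hJprime, hIJ, hJdisj⟩ :=
    DistribLattice.prime_ideal_of_disjoint_filter_ideal hdisj
  refine ⟨{x : L | e x ∉ J}, ?_, ?_, ?_, ?_⟩
  · exact Set.disjoint_left.1 hJdisj (by simp [PFilter.mem_principal])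
  · simp only [Set.mem_setOf_eq, not_not]
    exact hIJ (Ideal.mem_principal_self)
  · intro x y
    simp only [Set.mem_setOf_eq, he_sup]
    constructor
    · intro hxy
      by_contra hc
      push_neg at hc
      exact hxy (J.sup_mem hc.1 hc.2)
    · rintro (hx | hy) hmem
      · exact hx (J.lower le_sup_left hmem)
      · exact hy (J.lower le_sup_right hmem)
  · intro x y
    simp only [Set.mem_setOf_eq, he_inf]
    constructor
    · intro hxy
      exact ⟨fun hx => hxy (J.lower inf_le_left hx), fun hy => hxy (J.lower inf_le_right hy)⟩
    · rintro ⟨hx, hy⟩ hmem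
      rcases hJprime.mem_or_mem hmem with h' | h'
      · exact hx h'
      · exact hy h'

variable {L : Type*} [Lattice L] {g : L → L} {S : Set L}

theorem RotAux.subset_genSub : S ⊆ genSub g S := fun x hx =>
  Set.mem_sInter.2 fun _ hT => hT.1 hx

theorem RotAux.genSub_sup {x y : L} (hx : x ∈ genSub g S) (hy : y ∈ genSub g S) :
    x ⊔ y ∈ genSub g S :=
  Set.mem_sInter.2 fun T hT =>
    hT.2.1 x (Set.mem_sInter.1 hx T hT) y (Set.mem_sInter.1 hy T hT)

theorem RotAux.genSub_inf {x y : L} (hx : x ∈ genSub g S) (hy : y ∈ genSub g S) :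
    x ⊓ y ∈ genSub g S :=
  Set.mem_sInter.2 fun T hT =>
    hT.2.2.1 x (Set.mem_sInter.1 hx T hT) y (Set.mem_sInter.1 hy T hT)

theorem RotAux.genSub_g {x : L} (hx : x ∈ genSub g S) : g x ∈ genSub g S :=
  Set.mem_sInter.2 fun T hT => hT.2.2.2 x (Set.mem_sInter.1 hx T hT)

theorem RotAux.genSub_subset {T : Set L} (h1 : S ⊆ T)
    (h2 : ∀ x ∈ T, ∀ y ∈ T, x ⊔ y ∈ T) (h3 : ∀ x ∈ T, ∀ y ∈ T, x ⊓ y ∈ T)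
    (h4 : ∀ x ∈ T, g x ∈ T) : genSub g S ⊆ T :=
  Set.sInter_subset_of_mem ⟨h1, h2, h3, h4⟩

end Aux

/-- In a subdirectly irreducible distributive rotational lattice,
if `a` is non-stable with orbit of size `n`, then the subalgebra generated by `{a}`
is isomorphic to the `n`-dimensional rotational cube `𝔅_n` (the powerset lattice of
`ZMod n` with the shift). -/
theorem stmt_9 {L : Type*} [DistribLattice L] (g : L → L)
    (hsup : ∀ x y : L, g (x ⊔ y) = g x ⊔ g y)
    (hinf : ∀ x y : L, g (x ⊓ y) = g x ⊓ g y)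
    (hbij : Function.Bijective g)
    (hord : ∃ m : ℕ, 0 < m ∧ g^[m] = id)
    (hSI : SubdirectlyIrreducible g)
    (a : L) (ha : g a ≠ a)
    (n : ℕ) (horb : (Set.range fun i : ℕ => g^[i] a).ncard = n) :
    ∃ f : L → Set (ZMod n),
      Set.BijOn f (genSub g {a}) Set.univ ∧
      (∀ x ∈ genSub g {a}, ∀ y ∈ genSub g {a},
        f (x ⊔ y) = f x ∪ f y ∧ f (x ⊓ y) = f x ∩ f y) ∧
      (∀ x ∈ genSub g {a}, f (g x) = (· + 1) '' f x) := by
  classical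
  obtain ⟨m, hm0, hgm⟩ := hord
  have hgm' : ∀ x : L, g^[m] x = x := fun x => congrFun hgm x
  -- iterated homomorphism properties
  have hgsup_it : ∀ (k : ℕ) (x y : L), g^[k] (x ⊔ y) = g^[k] x ⊔ g^[k] y := by
    intro k
    induction k with
    | zero => intro x y; simp
    | succ k ih =>
      intro x y
      simp only [Function.iterate_succ_apply', ih, hsup]
  have hginf_it : ∀ (k : ℕ) (x y : L), g^[k] (x ⊓ y) = g^[k] x ⊓ g^[k] y := by
    intro k
    induction k with
    | zero => intro x y; simp
    | succ k ih =>
      intro x y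
      simp only [Function.iterate_succ_apply', ih, hinf]
  set gi : L → L := g^[m-1] with hgi_def
  have hgi_g : ∀ x : L, gi (g x) = x := by
    intro x
    have h1 := hgm' x
    rw [show m = (m-1)+1 by omega, Function.iterate_succ_apply] at h1
    exact h1
  have hg_gi : ∀ x : L, g (gi x) = x := by
    intro x
    have h1 := hgm' x
    rw [show m = (m-1)+1 by omega, Function.iterate_succ_apply'] at h1
    exact h1
  have hgi_it_g_it : ∀ (k : ℕ) (x : L), gi^[k] (g^[k] x) = x := by
    intro k
    induction k with
    | zero => intro x; simp
    | succ k ih =>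
      intro x
      have h1 : g^[k+1] x = g (g^[k] x) := Function.iterate_succ_apply' g k x
      have h2 : gi^[k+1] (g^[k+1] x) = gi^[k] (gi (g^[k+1] x)) :=
        Function.iterate_succ_apply gi k _
      rw [h2, h1, hgi_g, ih]
  have hgisup_it : ∀ (k : ℕ) (x y : L), gi^[k] (x ⊔ y) = gi^[k] x ⊔ gi^[k] y := by
    intro k
    induction k with
    | zero => intro x y; simp
    | succ k ih =>
      intro x y
      simp only [Function.iterate_succ_apply', ih]
      exact hgsup_it (m-1) _ _
  have hgiinf_it : ∀ (k : ℕ) (x y : L), gi^[k] (x ⊓ y) = gi^[k] x ⊓ gi^[k] y := by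
    intro k
    induction k with
    | zero => intro x y; simp
    | succ k ih =>
      intro x y
      simp only [Function.iterate_succ_apply', ih]
      exact hginf_it (m-1) _ _
  have hm2 : 2 ≤ m := by
    by_contra h2
    have hm1 : m = 1 := by omega
    subst hm1
    rw [Function.iterate_one] at hgm
    exact ha (by rw [hgm]; rfl)
  -- gi^[m-1] = g
  have hg_mul_id : ∀ (q : ℕ) (x : L), g^[m*q] x = x := by
    intro q x
    rw [Function.iterate_mul, hgm, Function.iterate_id]
    rfl
  have hg_mod : ∀ (k : ℕ) (x : L), g^[k] x = g^[k % m] x := by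
    intro k x
    conv_lhs => rw [show k = m*(k/m) + k%m from (Nat.div_add_mod k m).symm]
    rw [Function.iterate_add_apply]
    exact hg_mul_id _ _
  have hgi_pow : ∀ x : L, gi^[m-1] x = g x := by
    intro x
    have h1 : gi^[m-1] x = g^[(m-1)*(m-1)] x := by
      rw [Function.iterate_mul]
    have h2 : (m-1)*(m-1) % m = 1 := by
      obtain ⟨k, rfl⟩ := Nat.exists_eq_add_of_le hm2
      have e1 : 2 + k - 1 = k + 1 := by omega
      rw [e1]
      have e2 : (k+1)*(k+1) = (2+k)*k + 1 := by ring
      rw [e2, Nat.mul_add_mod]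
      exact Nat.mod_eq_of_lt (by omega)
    rw [h1, hg_mod, h2, Function.iterate_one]
  -- orbit: least period
  set b : ℕ → L := fun i => g^[i] a with hb_def
  have hex : ∃ k, 0 < k ∧ g^[k] a = a := ⟨m, hm0, hgm' a⟩
  set p : ℕ := Nat.find hex with hp_def
  have hp0 : 0 < p := (Nat.find_spec hex).1
  have hgp : g^[p] a = a := (Nat.find_spec hex).2
  have hpmin : ∀ k, 0 < k → k < p → g^[k] a ≠ a := by
    intro k hk1 hk2 hk3
    exact Nat.find_min hex hk2 ⟨hk1, hk3⟩
  have hp_mul : ∀ q : ℕ, g^[p*q] a = a := by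
    intro q
    induction q with
    | zero => simp
    | succ q ih =>
      rw [Nat.mul_succ, Function.iterate_add_apply, hgp, ih]
  have hp_mod : ∀ k : ℕ, g^[k] a = g^[k % p] a := by
    intro k
    conv_lhs => rw [show k = p*(k/p) + k%p from (Nat.div_add_mod k p).symm]
    rw [Nat.add_comm, Function.iterate_add_apply, hp_mul]
  have hinj_lt : ∀ i j, i < p → j < p → g^[i] a = g^[j] a → i = j := by
    have key : ∀ i j, i ≤ j → j < p → g^[i] a = g^[j] a → i = j := by
      intro i j hij hjp heq
      by_contra hne
      have hji : j = i + (j - i) := by omega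
      rw [hji, Function.iterate_add_apply] at heq
      have h1 : gi^[i] (g^[i] a) = gi^[i] (g^[i] (g^[j-i] a)) := by rw [heq]
      rw [hgi_it_g_it, hgi_it_g_it] at h1
      exact hpmin (j - i) (by omega) (by omega) h1.symm
    intro i j hi hj heq
    rcases le_total i j with h | h
    · exact key i j h hj heq
    · exact (key j i h hi heq.symm).symm
  have hnp : n = p := by
    have hre : Set.range b = b '' Set.Iio p := by
      ext z
      constructor
      · rintro ⟨i, rfl⟩
        exact ⟨i % p, Nat.mod_lt _ hp0, (hp_mod i).symm⟩
      · rintro ⟨i, _, rfl⟩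
        exact ⟨i, rfl⟩
    have hinjOn : Set.InjOn b (Set.Iio p) := fun i hi j hj heq =>
      hinj_lt i j hi hj heq
    rw [← horb, hre, Set.ncard_image_of_injOn hinjOn, ← Finset.coe_range,
      Set.ncard_coe_finset, Finset.card_range]
  subst hnp
  rename' hp0 => hn0, hgp => hgn, hpmin => hnmin, hp_mod => hn_mod
  have hn2 : 2 ≤ p := by
    rcases Nat.lt_or_ge p 2 with h2 | h2
    · exfalso
      have hp1 : p = 1 := by omega
      rw [hp1, Function.iterate_one] at hgn
      exact ha hgn
    · exact h2
  set n := p with hn_def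
  haveI : NeZero n := ⟨by omega⟩
  haveI : Fact (1 < n) := ⟨by omega⟩
  -- the generated subalgebra D
  set D : Set L := genSub g {a} with hD_def
  have haD : a ∈ D := RotAux.subset_genSub rfl
  have hDg_it : ∀ k : ℕ, g^[k] a ∈ D := by
    intro k
    induction k with
    | zero => exact haD
    | succ k ih => rw [Function.iterate_succ_apply']; exact RotAux.genSub_g ih
  have hgnD : ∀ x ∈ D, g^[n] x = x := by
    have : D ⊆ {x | x ∈ D ∧ g^[n] x = x} := by
      apply RotAux.genSub_subset
      · intro s hs
        rcases hs with rfl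
        exact ⟨haD, hgn⟩
      · rintro x ⟨hx1, hx2⟩ y ⟨hy1, hy2⟩
        exact ⟨RotAux.genSub_sup hx1 hy1, by rw [hgsup_it, hx2, hy2]⟩
      · rintro x ⟨hx1, hx2⟩ y ⟨hy1, hy2⟩
        exact ⟨RotAux.genSub_inf hx1 hy1, by rw [hginf_it, hx2, hy2]⟩
      · rintro x ⟨hx1, hx2⟩
        refine ⟨RotAux.genSub_g hx1, ?_⟩
        rw [← Function.iterate_succ_apply, Function.iterate_succ_apply', hx2]
    exact fun x hx => (this hx).2
  have hgiD : ∀ x ∈ D, gi^[n] x = x := by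
    intro x hx
    calc gi^[n] x = gi^[n] (g^[n] x) := by rw [hgnD x hx]
    _ = x := hgi_it_g_it n x
  have hgiD_mul : ∀ (q : ℕ), ∀ x ∈ D, gi^[n*q] x = x := by
    intro q
    induction q with
    | zero => intro x _; simp
    | succ q ih =>
      intro x hx
      rw [Nat.mul_succ, Function.iterate_add_apply, hgiD x hx, ih x hx]
  have hgiD_mod : ∀ x ∈ D, ∀ k : ℕ, gi^[k] x = gi^[k % n] x := by
    intro x hx k
    conv_lhs => rw [show k = k % n + n*(k/n) from by rw [Nat.add_comm]; exact (Nat.div_add_mod k n).symm]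
    rw [Function.iterate_add_apply, hgiD_mul _ x hx]
  have hgD_eq : ∀ x ∈ D, g x = gi^[n-1] x := by
    intro x hx
    conv_lhs => rw [← hgiD x hx, show n = (n-1)+1 from by omega,
      Function.iterate_succ_apply', hg_gi]
  -- subdirect irreducibility: get a separating prime filter
  obtain ⟨μ, hμcong, hμne, hμmin⟩ := hSI
  obtain ⟨c, d, hcd, hμcd⟩ : ∃ c d : L, c ≠ d ∧ μ c d := by
    by_contra h'
    push_neg at h'
    apply hμne
    funext x y
    apply propext
    constructor
    · intro hμ
      by_contra hne
      exact h' x y hne hμ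
    · rintro rfl
      exact hμcong.1.refl x
  obtain ⟨P, u, v, huP, hvP, hμuv, hPsup, hPinf⟩ :
      ∃ (P : Set L) (u v : L), u ∈ P ∧ v ∉ P ∧ μ u v ∧
        (∀ x y : L, x ⊔ y ∈ P ↔ x ∈ P ∨ y ∈ P) ∧
        (∀ x y : L, x ⊓ y ∈ P ↔ x ∈ P ∧ y ∈ P) := by
    have : ¬ c ≤ d ∨ ¬ d ≤ c := by
      by_contra h'
      push_neg at h'
      exact hcd (le_antisymm h'.1 h'.2)
    rcases this with h' | h'
    · obtain ⟨P, h1, h2, h3, h4⟩ := RotAux.exists_primefilter h'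
      exact ⟨P, c, d, h1, h2, hμcd, h3, h4⟩
    · obtain ⟨P, h1, h2, h3, h4⟩ := RotAux.exists_primefilter h'
      exact ⟨P, d, c, h1, h2, hμcong.1.symm hμcd, h3, h4⟩
  -- the congruence induced by the orbit of P
  set θ : L → L → Prop := fun x y => ∀ i : ℕ, (gi^[i] x ∈ P ↔ gi^[i] y ∈ P) with hθ_def
  have hθcong : IsCongruence g θ := by
    refine ⟨⟨fun x i => Iff.rfl, fun hxy i => (hxy i).symm,
      fun h1 h2 i => (h1 i).trans (h2 i)⟩, ?_, ?_, ?_⟩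
    · intro x1 y1 x2 y2 h1 h2 i
      rw [hgisup_it, hgisup_it, hPsup, hPsup]
      exact or_congr (h1 i) (h2 i)
    · intro x1 y1 x2 y2 h1 h2 i
      rw [hgiinf_it, hgiinf_it, hPinf, hPinf]
      exact and_congr (h1 i) (h2 i)
    · intro x y hxy i
      cases i with
      | zero =>
        simp only [Function.iterate_zero, id_eq]
        have h1 := hxy (m-1)
        rwa [hgi_pow x, hgi_pow y] at h1
      | succ k =>
        rw [Function.iterate_succ_apply, Function.iterate_succ_apply, hgi_g, hgi_g]
        exact hxy k
  have hθinj : ∀ x y : L, θ x y → x = y := by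
    intro x y hxy
    by_contra hne
    have hθne : θ ≠ (· = ·) := by
      intro he
      apply hne
      rw [he] at hxy
      exact hxy
    have := hμmin θ hθcong hθne u v hμuv 0
    simp only [Function.iterate_zero, id_eq] at this
    exact hvP (this.1 huP)
  -- the isomorphism
  set f : L → Set (ZMod n) := fun x => {i : ZMod n | gi^[ZMod.val i] x ∈ P} with hf_def
  have hfsup : ∀ x y : L, f (x ⊔ y) = f x ∪ f y := by
    intro x y
    ext i
    simp only [f, Set.mem_setOf_eq, Set.mem_union]
    rw [hgisup_it, hPsup]
  have hfinf : ∀ x y : L, f (x ⊓ y) = f x ∩ f y := by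
    intro x y
    ext i
    simp only [f, Set.mem_setOf_eq, Set.mem_inter_iff]
    rw [hgiinf_it, hPinf]
  have hfD_mod : ∀ x ∈ D, ∀ k : ℕ, (gi^[k] x ∈ P ↔ (↑k : ZMod n) ∈ f x) := by
    intro x hx k
    simp only [f, Set.mem_setOf_eq, ZMod.val_natCast]
    rw [hgiD_mod x hx k]
  have hcast_val : ∀ i : ZMod n, ((ZMod.val i : ℕ) : ZMod n) = i := by
    intro i
    rw [ZMod.natCast_val, ZMod.cast_id]
  have hmem_image : ∀ (S : Set (ZMod n)) (i : ZMod n),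
      (i ∈ (· + 1) '' S ↔ i - 1 ∈ S) := by
    intro S i
    constructor
    · rintro ⟨j, hj, hji⟩
      have : i - 1 = j := by
        simp only at hji
        rw [← hji]; ring
      rwa [this]
    · intro hi
      exact ⟨i - 1, hi, by simp⟩
  have hfg : ∀ x ∈ D, f (g x) = (· + 1) '' f x := by
    intro x hx
    ext i
    rw [hmem_image]
    show gi^[ZMod.val i] (g x) ∈ P ↔ i - 1 ∈ f x
    rw [hgD_eq x hx, ← Function.iterate_add_apply]
    rw [hfD_mod x hx]
    have hc : ((ZMod.val i + (n - 1) : ℕ) : ZMod n) = i - 1 := by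
      push_cast [Nat.cast_sub (show 1 ≤ n by omega)]
      rw [hcast_val, ZMod.natCast_self]
      ring
    rw [hc]
  have hInj : Set.InjOn f D := by
    intro x hx y hy hfeq
    apply hθinj
    intro i
    rw [hfD_mod x hx i, hfD_mod y hy i, hfeq]
  -- the image of the orbit
  set A : Set (ZMod n) := f a with hA_def
  have hA : ∀ (k : ℕ) (i : ZMod n), (i ∈ f (g^[k] a) ↔ i - (k : ZMod n) ∈ A) := by
    intro k
    induction k with
    | zero => intro i; simp [hA_def]
    | succ k ih =>
      intro i
      rw [Function.iterate_succ_apply', hfg _ (hDg_it k), hmem_image, ih]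
      have : i - 1 - (k : ZMod n) = i - ((k+1 : ℕ) : ZMod n) := by
        push_cast
        ring
      rw [this]
  have hAkinj : ∀ k : ZMod n, f (g^[ZMod.val k] a) = A → k = 0 := by
    intro k hk
    have heq : g^[ZMod.val k] a = a := hInj (hDg_it _) haD hk
    by_contra hkne
    have hv0 : ZMod.val k ≠ 0 := fun h => hkne ((ZMod.val_eq_zero k).1 h)
    exact hnmin (ZMod.val k) (by omega) (ZMod.val_lt k) heq
  have hAne : A.Nonempty := by
    by_contra h'
    rw [Set.not_nonempty_iff_eq_empty] at h'
    have h1 : f (g^[ZMod.val (1 : ZMod n)] a) = A := by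
      rw [ZMod.val_one]
      ext i
      rw [hA 1]
      simp [h']
    have := hAkinj 1 h1
    exact one_ne_zero this
  have hperiod : ∀ d : ZMod n, (∀ s ∈ A, s + d ∈ A) → d = 0 := by
    intro d hd
    have hiter : ∀ (j : ℕ), ∀ s ∈ A, s + j • d ∈ A := by
      intro j
      induction j with
      | zero => intro s hs; simpa using hs
      | succ j ih =>
        intro s hs
        have : s + (j+1) • d = (s + d) + j • d := by
          rw [succ_nsmul]
          ring
        rw [this]
        exact ih _ (hd s hs)
    have hback : ∀ s : ZMod n, s + d ∈ A → s ∈ A := by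
      intro s hs
      have ht0 : 0 < addOrderOf d := addOrderOf_pos d
      have := hiter (addOrderOf d - 1) _ hs
      have he : (s + d) + (addOrderOf d - 1) • d = s := by
        have h1 : (addOrderOf d - 1) + 1 = addOrderOf d := by omega
        calc (s + d) + (addOrderOf d - 1) • d
            = s + ((addOrderOf d - 1) • d + d) := by ring
          _ = s + ((addOrderOf d - 1) + 1) • d := by rw [succ_nsmul]
          _ = s + addOrderOf d • d := by rw [h1]
          _ = s := by rw [addOrderOf_nsmul_eq_zero, add_zero]
      rwa [he] at this
    have hshift : f (g^[ZMod.val (-d)] a) = A := by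
      ext i
      rw [hA, hcast_val]
      rw [sub_neg_eq_add]
      exact ⟨hback i, fun hi => hd i hi⟩
    have := hAkinj (-d) hshift
    rwa [neg_eq_zero] at this
  -- the image E of D
  set E : Set (Set (ZMod n)) := f '' D with hE_def
  have hEunion : ∀ u ∈ E, ∀ v ∈ E, u ∪ v ∈ E := by
    rintro u ⟨x, hx, rfl⟩ v ⟨y, hy, rfl⟩
    exact ⟨x ⊔ y, RotAux.genSub_sup hx hy, hfsup x y⟩
  have hEinter : ∀ u ∈ E, ∀ v ∈ E, u ∩ v ∈ E := by
    rintro u ⟨x, hx, rfl⟩ v ⟨y, hy, rfl⟩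
    exact ⟨x ⊓ y, RotAux.genSub_inf hx hy, hfinf x y⟩
  have hAkE : ∀ k : ℕ, f (g^[k] a) ∈ E := fun k => ⟨g^[k] a, hDg_it k, rfl⟩
  -- closure under nonempty finite intersections
  have hEinf' : ∀ (s : Finset (ZMod n)) (hs : s.Nonempty) (F : ZMod n → Set (ZMod n)),
      (∀ j ∈ s, F j ∈ E) → s.inf' hs F ∈ E := by
    intro s hs F
    induction hs using Finset.Nonempty.cons_induction with
    | singleton j => intro h; simpa using h j (by simp)
    | cons j s hj hs ih =>
      intro h
      rw [Finset.inf'_cons]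
      have h1 : F j ∈ E := h j (Finset.mem_cons_self j s)
      have h2 : s.inf' hs F ∈ E := ih (fun k hk => h k (Finset.mem_cons_of_mem hk))
      exact hEinter _ h1 _ h2
      exact hs
  -- singletons belong to E
  have hsingleton : ∀ i : ZMod n, ({i} : Set (ZMod n)) ∈ E := by
    intro i
    set K : Finset (ZMod n) := (Set.toFinite {k : ZMod n | i - k ∈ A}).toFinset with hK_def
    have hKmem : ∀ k, k ∈ K ↔ i - k ∈ A := by
      intro k; rw [hK_def, Set.Finite.mem_toFinset]; rfl
    have hKne : K.Nonempty := by
      obtain ⟨s, hs⟩ := hAne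
      exact ⟨i - s, (hKmem _).2 (by rwa [sub_sub_cancel])⟩
    have hBmem : ∀ j, j ∈ K.inf' hKne (fun k => f (g^[ZMod.val k] a)) ↔
        ∀ k ∈ K, j ∈ f (g^[ZMod.val k] a) := by
      intro j
      rw [Finset.inf'_eq_inf, Finset.inf_set_eq_iInter]
      simp
    have hBeq : K.inf' hKne (fun k => f (g^[ZMod.val k] a)) = {i} := by
      ext j
      rw [hBmem]
      constructor
      · intro hj
        have hshift : ∀ s ∈ A, s + (j - i) ∈ A := by
          intro s hs
          have hk : (i - s) ∈ K := (hKmem _).2 (by rwa [sub_sub_cancel])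
          have h2 := hj _ hk
          rw [hA, hcast_val] at h2
          have he : j - (i - s) = s + (j - i) := by ring
          rwa [he] at h2
        have h3 := hperiod (j - i) hshift
        have h4 : j = i := sub_eq_zero.1 h3
        simp [h4]
      · intro hj
        simp only [Set.mem_singleton_iff] at hj
        subst hj
        intro k hk
        rw [hA, hcast_val]
        exact (hKmem k).1 hk
    rw [← hBeq]
    exact hEinf' K hKne _ (fun k _ => hAkE _)
  have hempty : (∅ : Set (ZMod n)) ∈ E := by
    have h01 : ({(0 : ZMod n)} ∩ {1} : Set (ZMod n)) = ∅ := by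
      rw [Set.singleton_inter_eq_empty]
      simp only [Set.mem_singleton_iff]
      exact zero_ne_one
    rw [← h01]
    exact hEinter _ (hsingleton 0) _ (hsingleton 1)
  have hEsup : ∀ (s : Finset (ZMod n)),
      s.sup (fun j => ({j} : Set (ZMod n))) ∈ E := by
    intro s
    induction s using Finset.induction_on with
    | empty => simpa using hempty
    | insert _ _ hj ih =>
      rw [Finset.sup_insert]
      exact hEunion _ (hsingleton _) _ ih
  have hSurj : ∀ S : Set (ZMod n), S ∈ E := by
    intro S
    have hS : S = (Set.toFinite S).toFinset.sup (fun j => ({j} : Set (ZMod n))) := by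
      rw [Finset.sup_set_eq_biUnion]
      ext j
      constructor
      · intro hj
        exact Set.mem_biUnion ((Set.Finite.mem_toFinset _).2 hj) rfl
      · intro hj
        obtain ⟨k, hk, hjk⟩ := Set.mem_iUnion₂.1 hj
        rw [Set.mem_singleton_iff] at hjk
        subst hjk
        exact (Set.Finite.mem_toFinset _).1 hk
    rw [hS]
    exact hEsup _
  exact ⟨f, ⟨fun x _ => Set.mem_univ _, hInj, fun S _ => hSurj S⟩,
    fun x _ y _ => ⟨hfsup x y, hfinf x y⟩, hfg⟩
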